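/- arXiv:2604.21808 — 4 statements merged into one kernel-verified Lean document; each statement's English description precedes it below -/
import Mathlib

section
/- Let G be a matrix over a field with full row rank, and let G_1 be a matrix with the same row space as G. Then rank(G G^T) = rank(G_1 G_1^T). -/
lemma exists_factor_of_rowSpace_le {F : Type*} [Field F] {k l n : ℕ}
    (G : Matrix (Fin k) (Fin n) F) (G1 : Matrix (Fin l) (Fin n) F)
    (h : Submodule.span F (Set.range fun i => G1 i) ≤
      Submodule.span F (Set.range fun i => G i)) :
    ∃ A : Matrix (Fin l) (Fin k) F, G1 = A * G := by
  have hmem : ∀ j, G1 j ∈ Submodule.span F (Set.range fun i => G i) := fun j =>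
    h (Submodule.subset_span ⟨j, rfl⟩)
  choose c hc using fun j => (Submodule.mem_span_range_iff_exists_fun F).mp (hmem j)
  refine ⟨Matrix.of c, ?_⟩
  ext j i
  have := congrFun (hc j) i
  simp only [Finset.sum_apply, Pi.smul_apply, smul_eq_mul] at this
  simp [Matrix.mul_apply, this]

/-- If `G` has full row rank and `G₁` has the same row space as `G`, then
`rank (G Gᵀ) = rank (G₁ G₁ᵀ)`. -/
theorem rank_gram_eq_of_same_rowSpace (F : Type*) [Field F] (k l n : ℕ)
    (G : Matrix (Fin k) (Fin n) F) (G1 : Matrix (Fin l) (Fin n) F)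
    (hG : G.rank = k)
    (hrow : Submodule.span F (Set.range fun i => G i) =
      Submodule.span F (Set.range fun i => G1 i)) :
    (G * G.transpose).rank = (G1 * G1.transpose).rank := by
  obtain ⟨A, hA⟩ := exists_factor_of_rowSpace_le G G1 hrow.ge
  obtain ⟨B, hB⟩ := exists_factor_of_rowSpace_le G1 G hrow.le
  apply le_antisymm
  · calc (G * G.transpose).rank = (B * (G1 * G1.transpose) * B.transpose).rank := by
          rw [hB]; simp [Matrix.transpose_mul, Matrix.mul_assoc]
        _ ≤ (G1 * G1.transpose).rank :=
          le_trans (Matrix.rank_mul_le_left _ _)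
            (Matrix.rank_mul_le_right _ _)
  · calc (G1 * G1.transpose).rank = (A * (G * G.transpose) * A.transpose).rank := by
          rw [hA]; simp [Matrix.transpose_mul, Matrix.mul_assoc]
        _ ≤ (G * G.transpose).rank :=
          le_trans (Matrix.rank_mul_le_left _ _)
            (Matrix.rank_mul_le_right _ _)
end

section
/- Let X^a and X^b be monomials of degree v in variables x_0,...,x_m over F_q, and let P_1,...,P_n be the standard representatives of projective points of P^m(F_q) (first nonzero coordinate equal to 1). With c_i = a_i + b_i, the inner product Σ_{s=1}^{n} (X^a X^b)(P_s) equals Σ_{j=0}^{m} (Π_{i<j} 0^{c_i}) · Π_{t>j} σ(c_t), where σ(d) = Σ_{α∈F_q} α^d and 0^0 = 1. -/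
/-- The sum of the monomial with exponent vector `c` over the standard
representatives of the points of `ℙ^m(F)` (vectors whose first nonzero
coordinate equals `1`). -/
def projSum (F : Type*) [Field F] [Fintype F] [DecidableEq F] (m : ℕ)
    (c : Fin (m + 1) → ℕ) : F :=
  ∑ p ∈ Finset.univ.filter
      (fun p : Fin (m + 1) → F => ∃ j, p j = 1 ∧ ∀ i, i < j → p i = 0),
    ∏ i, p i ^ c i

/-- Entry formula: for degree-`v` monomials `X^a`, `X^b` in `x_0, …, x_m`, the sum
of `X^a X^b` over the standard representatives of `ℙ^m(F_q)` equals
`∑_{j=0}^m (∏_{i<j} 0^{c_i}) ∏_{t>j} σ(c_t)`, where `c_i = a_i + b_i` and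
`σ(d) = ∑_{α ∈ F_q} α^d` (with `0^0 = 1`). -/
theorem projSum_entry_formula (F : Type*) [Field F] [Fintype F] [DecidableEq F]
    (m v : ℕ) (a b : Fin (m + 1) → ℕ)
    (hav : ∑ i, a i = v) (hbv : ∑ i, b i = v) :
    projSum F m (fun i => a i + b i) =
      ∑ j : Fin (m + 1),
        (∏ i ∈ Finset.univ.filter (· < j), (0 : F) ^ (a i + b i)) *
          ∏ t ∈ Finset.univ.filter (j < ·), ∑ α : F, α ^ (a t + b t) := by
  classical
  have hdecomp : (Finset.univ.filter
      (fun p : Fin (m + 1) → F => ∃ j, p j = 1 ∧ ∀ i, i < j → p i = 0))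
    = Finset.univ.biUnion (fun j : Fin (m+1) =>
        Finset.univ.filter (fun p : Fin (m+1) → F => p j = 1 ∧ ∀ i, i < j → p i = 0)) := by
    ext p; simp [Finset.mem_biUnion]
  unfold projSum
  rw [hdecomp, Finset.sum_biUnion ?disj]
  case disj =>
    intro j1 _ j2 _ hne
    apply Finset.disjoint_left.mpr
    intro p hp1 hp2
    simp only [Finset.coe_filter, Set.mem_setOf_eq, Finset.mem_filter] at hp1 hp2
    rcases lt_or_gt_of_ne hne with h | h
    · exact one_ne_zero (hp1.2.1 ▸ hp2.2.2 j1 h)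
    · exact one_ne_zero (hp2.2.1 ▸ hp1.2.2 j2 h)
  apply Finset.sum_congr rfl
  intro j _
  have hset : Finset.univ.filter (fun p : Fin (m+1) → F => p j = 1 ∧ ∀ i, i < j → p i = 0)
      = Fintype.piFinset (fun i => if i < j then ({0} : Finset F)
          else if i = j then {1} else Finset.univ) := by
    ext p
    simp only [Finset.mem_filter, Finset.mem_univ, true_and, Fintype.mem_piFinset]
    constructor
    · rintro ⟨h1, h2⟩ i
      split_ifs with hij hij2
      · simpa using h2 i hij
      · simpa [hij2]
      · simp
    · intro h
      refine ⟨?_, fun i hi => ?_⟩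
      · have := h j; simpa using this
      · have := h i; rw [if_pos hi] at this; simpa using this
  rw [hset]
  beta_reduce
  rw [← Finset.prod_univ_sum (fun i => if i < j then ({0} : Finset F)
      else if i = j then {1} else Finset.univ) (fun i y => y ^ (a i + b i))]
  rw [← Finset.prod_filter_mul_prod_filter_not Finset.univ (· < j)]
  have hsplit : Finset.univ.filter (fun i : Fin (m+1) => ¬ i < j)
      = insert j (Finset.univ.filter (j < ·)) := by
    ext i
    simp only [Finset.mem_filter, Finset.mem_univ, true_and, Finset.mem_insert, not_lt,
      le_iff_lt_or_eq]
    tauto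
  rw [hsplit, Finset.prod_insert (by simp)]
  have hj : (∑ x ∈ (if j < j then ({0} : Finset F)
      else if j = j then {1} else Finset.univ), x ^ (a j + b j)) = 1 := by
    simp
  rw [hj, one_mul]
  congr 1
  · exact Finset.prod_congr rfl fun i hi => by
      rw [Finset.mem_filter] at hi
      rw [if_pos hi.2]
      simp
  · refine Finset.prod_congr rfl fun i hi => ?_
    rw [Finset.mem_filter] at hi
    rw [if_neg (by exact fun h => absurd (h.trans hi.2) (lt_irrefl i)),
      if_neg (by exact fun h => absurd (h ▸ hi.2) (lt_irrefl j))]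
end

section
/- Let q be a prime power, Q = q-1, v in the open interval (rQ/2, (r+1)Q/2), and write 2v = rQ + β with 0 < β < Q. Let X^a, X^b be degree-v monomials in x_0,...,x_m, c_i = a_i + b_i. Then Σ_{P} (X^a X^b)(P) over standard representatives P of P^m(F_q) is nonzero if and only if, setting s = min{i : c_i > 0}, we have c_s ≡ β (mod Q) and c_j is a positive multiple of Q for every j > s; in that case the sum equals (-1)^{m-s}. -/
lemma mySigma (F : Type*) [Field F] [Fintype F] [DecidableEq F] (d : ℕ) :
    (∑ x : F, x ^ d) = if (Fintype.card F - 1) ∣ d ∧ 0 < d then -1 else 0 := by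
  rcases Nat.eq_zero_or_pos d with h0 | hd
  · subst h0
    simp only [pow_zero, Finset.sum_const, Finset.card_univ, nsmul_eq_mul, mul_one,
      lt_irrefl, and_false, if_false]
    exact FiniteField.cast_card_eq_zero F
  · rw [show (if (Fintype.card F - 1) ∣ d ∧ 0 < d then (-1 : F) else 0)
        = (if (Fintype.card F - 1) ∣ d then (-1 : F) else 0) from by simp [hd]]
    let φ : Fˣ ↪ F := ⟨fun x => x, fun _ _ h => Units.ext h⟩
    have hmap : Finset.univ.map φ = Finset.univ \ {0} := by
      ext x
      simpa only [Finset.mem_map, Finset.mem_univ, Function.Embedding.coeFn_mk, true_and,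
        Finset.mem_sdiff, Finset.mem_singleton, φ] using
          (show (∃ a : Fˣ, φ a = x) ↔ ¬x = 0 from isUnit_iff_ne_zero)
    calc ∑ x : F, x ^ d = ∑ x ∈ Finset.univ \ {(0 : F)}, x ^ d := by
          rw [← Finset.sum_sdiff (Finset.subset_univ {(0:F)}), Finset.sum_singleton,
            zero_pow hd.ne', add_zero]
      _ = ∑ x : Fˣ, (x : F) ^ d := by rw [← hmap, Finset.sum_map]; rfl
      _ = if (Fintype.card F - 1) ∣ d then -1 else 0 := FiniteField.sum_pow_units F d

lemma projSum_eq (F : Type*) [Field F] [Fintype F] [DecidableEq F] (m : ℕ)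
    (c : Fin (m + 1) → ℕ) :
    projSum F m c = ∑ j : Fin (m + 1), ∏ i,
      (if i < j then (0 : F) ^ c i else if i = j then 1 else ∑ x : F, x ^ c i) := by
  classical
  set A : Fin (m + 1) → Fin (m + 1) → Finset F := fun j i =>
    if i < j then {0} else if i = j then {1} else Finset.univ with hA
  have hmem : ∀ (j : Fin (m + 1)) (p : Fin (m + 1) → F),
      p ∈ Fintype.piFinset (A j) ↔ (p j = 1 ∧ ∀ i, i < j → p i = 0) := by
    intro j p
    rw [Fintype.mem_piFinset]
    constructor
    · intro h
      refine ⟨?_, fun i hi => ?_⟩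
      · have := h j
        simp only [hA, lt_irrefl, if_false, if_true, Finset.mem_singleton] at this
        simpa using this
      · have := h i
        simp only [hA, if_pos hi, Finset.mem_singleton] at this
        exact this
    · rintro ⟨h1, h2⟩ i
      simp only [hA]
      split_ifs with hlt heq
      · simp [h2 i hlt]
      · simp [heq, h1]
      · simp
  have hset : (Finset.univ.filter
      (fun p : Fin (m + 1) → F => ∃ j, p j = 1 ∧ ∀ i, i < j → p i = 0))
      = Finset.univ.biUnion (fun j => Fintype.piFinset (A j)) := by
    ext p
    simp only [Finset.mem_filter, Finset.mem_univ, true_and, Finset.mem_biUnion]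
    constructor
    · rintro ⟨j, hj1, hj2⟩
      refine ⟨j, ?_⟩
      exact (hmem j p).2 ⟨hj1, hj2⟩
    · rintro ⟨j, hj⟩
      obtain ⟨hj1, hj2⟩ := (hmem j p).1 hj
      exact ⟨j, hj1, hj2⟩
  have hdisj : ∀ j ∈ Finset.univ, ∀ j' ∈ Finset.univ, j ≠ j' →
      Disjoint (Fintype.piFinset (A j)) (Fintype.piFinset (A j')) := by
    intro j _ j' _ hne
    rw [Finset.disjoint_left]
    intro p hp hp'
    obtain ⟨h1, h2⟩ := (hmem j p).1 hp
    obtain ⟨h1', h2'⟩ := (hmem j' p).1 hp'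
    rcases lt_trichotomy j j' with h | h | h
    · exact one_ne_zero (h1 ▸ h2' j h)
    · exact hne h
    · exact one_ne_zero (h1' ▸ h2 j' h)
  rw [projSum, hset, Finset.sum_biUnion hdisj]
  refine Finset.sum_congr rfl fun j _ => ?_
  refine ((Finset.prod_univ_sum (A j) fun i (x : F) => x ^ c i).symm).trans ?_
  refine Finset.prod_congr rfl fun i _ => ?_
  simp only [hA]
  split_ifs with hlt heq
  · rw [Finset.sum_singleton]
  · rw [Finset.sum_singleton, one_pow]
  · rfl

/-- Nonzero-entry criterion in the open interval `rQ/2 < v < (r+1)Q/2`: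
writing `2v = rQ + β` with `0 < β < Q` and `c_i = a_i + b_i`, the projective sum
of `X^a X^b` is nonzero iff `c_s ≡ β (mod Q)` and every `c_j` with `j > s` is a
positive multiple of `Q`, where `s = min {i : c_i > 0}`; in that case the sum
equals `(-1)^{m-s}`. -/
theorem projSum_ne_zero_criterion (F : Type*) [Field F] [Fintype F] [DecidableEq F]
    (q r v β m : ℕ) (hq : Fintype.card F = q)
    (h1 : r * (q - 1) < 2 * v) (h2 : 2 * v < (r + 1) * (q - 1))
    (hβ : β = 2 * v - r * (q - 1))
    (a b : Fin (m + 1) → ℕ) (hav : ∑ i, a i = v) (hbv : ∑ i, b i = v)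
    (s : Fin (m + 1)) (hs : 0 < a s + b s) (hmin : ∀ i, i < s → a i + b i = 0) :
    (projSum F m (fun i => a i + b i) ≠ 0 ↔
      ((a s + b s) % (q - 1) = β % (q - 1) ∧
        ∀ j, s < j → (q - 1) ∣ (a j + b j) ∧ 0 < a j + b j)) ∧
    (projSum F m (fun i => a i + b i) ≠ 0 →
      projSum F m (fun i => a i + b i) = (-1 : F) ^ (m - (s : ℕ))) := by
  classical
  obtain ⟨R, hR⟩ : ∃ R, r * (q - 1) = R := ⟨_, rfl⟩
  have hQR : (q - 1) ∣ R := hR ▸ dvd_mul_left (q - 1) r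
  rw [hR] at h1 hβ
  have e2 : (r + 1) * (q - 1) = R + (q - 1) := by rw [← hR]; ring
  rw [e2] at h2
  have hβpos : 0 < β := by omega
  have hβlt : β < q - 1 := by omega
  have h2v : 2 * v = R + β := by omega
  have hQpos : 0 < q - 1 := by omega
  have hσ : ∀ d : ℕ, (∑ x : F, x ^ d) = if (q - 1) ∣ d ∧ 0 < d then (-1 : F) else 0 := by
    intro d; rw [mySigma, hq]
  have hc2v : ∑ i, (a i + b i) = 2 * v := by
    rw [Finset.sum_add_distrib, hav, hbv]; ring
  have hsum2 : (a s + b s) + ∑ i ∈ Finset.Ioi s, (a i + b i) = 2 * v := by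
    rw [← hc2v]
    rw [← Finset.sum_subset (Finset.subset_univ (Finset.Ici s))
      (fun i _ hi => hmin i (lt_of_not_ge (by simpa using hi)))]
    rw [← Finset.Ioi_insert, Finset.sum_insert Finset.notMem_Ioi_self]
  set P : F := ∏ i ∈ Finset.Ioi s, (∑ x : F, x ^ (a i + b i)) with hP
  have hmod : (∀ j, s < j → (q - 1) ∣ (a j + b j) ∧ 0 < a j + b j) →
      (a s + b s) % (q - 1) = β % (q - 1) := by
    intro hD
    have hdvd : (q - 1) ∣ ∑ i ∈ Finset.Ioi s, (a i + b i) :=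
      Finset.dvd_sum fun i hi => (hD i (Finset.mem_Ioi.1 hi)).1
    have h3 : a s + b s + ∑ i ∈ Finset.Ioi s, (a i + b i) ≡ a s + b s [MOD q - 1] := by
      simpa using (Nat.ModEq.refl (a s + b s)).add
        ((Nat.modEq_zero_iff_dvd).2 hdvd)
    have h4 : a s + b s + ∑ i ∈ Finset.Ioi s, (a i + b i) = R + β := by
      rw [hsum2, h2v]
    have h5 : R + β ≡ β [MOD q - 1] := by
      simpa using ((Nat.modEq_zero_iff_dvd).2 hQR).add (Nat.ModEq.refl β)
    calc (a s + b s) ≡ a s + b s + ∑ i ∈ Finset.Ioi s, (a i + b i) [MOD q - 1] := h3.symm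
      _ = R + β := h4
      _ ≡ β [MOD q - 1] := h5
  have hβmodne : β % (q - 1) ≠ 0 := by rw [Nat.mod_eq_of_lt hβlt]; omega
  have hσs : (∀ j, s < j → (q - 1) ∣ (a j + b j) ∧ 0 < a j + b j) →
      (∑ x : F, x ^ (a s + b s)) = 0 := by
    intro hD
    rw [hσ, if_neg]
    rintro ⟨hdvd, -⟩
    apply hβmodne
    rw [← hmod hD]
    obtain ⟨t, ht⟩ := hdvd
    rw [ht, Nat.mul_mod_right]
  have hPval : (∀ j, s < j → (q - 1) ∣ (a j + b j) ∧ 0 < a j + b j) →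
      P = (-1 : F) ^ (m - (s : ℕ)) := by
    intro hD
    rw [hP, Finset.prod_congr rfl (fun i hi => by
      rw [hσ, if_pos (hD i (Finset.mem_Ioi.1 hi))]),
      Finset.prod_const, Fin.card_Ioi]
    congr 1
  have hPne : (∀ j, s < j → (q - 1) ∣ (a j + b j) ∧ 0 < a j + b j) → P ≠ 0 :=
    fun hD => hPval hD ▸ pow_ne_zero _ (neg_ne_zero.2 one_ne_zero)
  have hDofP : P ≠ 0 → (∀ j, s < j → (q - 1) ∣ (a j + b j) ∧ 0 < a j + b j) := by
    intro hPne j hj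
    have hne := Finset.prod_ne_zero_iff.1 hPne j (Finset.mem_Ioi.2 hj)
    rw [hσ] at hne
    by_contra hcon
    rw [if_neg hcon] at hne
    exact hne rfl
  have hT : ∀ j : Fin (m + 1), (∏ i, (if i < j then (0 : F) ^ (a i + b i)
        else if i = j then 1 else ∑ x : F, x ^ (a i + b i)))
      = if j = s then P
        else if (j : ℕ) + 1 = (s : ℕ) then (∑ x : F, x ^ (a s + b s)) * P else 0 := by
    intro j
    rcases eq_or_ne j s with h | hjs
    · subst h
      rw [if_pos rfl, hP]
      have hsub : ∏ i ∈ Finset.Ioi j, (if i < j then (0 : F) ^ (a i + b i)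
            else if i = j then 1 else ∑ x : F, x ^ (a i + b i))
          = ∏ i, (if i < j then (0 : F) ^ (a i + b i)
            else if i = j then 1 else ∑ x : F, x ^ (a i + b i)) := by
        refine Finset.prod_subset (Finset.subset_univ _) ?_
        intro i _ hi
        have hle : i ≤ j := le_of_not_gt fun hc => hi (Finset.mem_Ioi.2 hc)
        rcases hle.lt_or_eq with hlt | heq
        · rw [if_pos hlt, hmin i hlt, pow_zero]
        · subst heq; rw [if_neg (lt_irrefl i), if_pos rfl]
      rw [← hsub]
      refine Finset.prod_congr rfl fun i hi => ?_
      have h' : j < i := Finset.mem_Ioi.1 hi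
      rw [if_neg (not_lt.2 h'.le), if_neg h'.ne']
    · rw [if_neg hjs]
      rcases lt_or_gt_of_ne hjs with hlt | hgt
      · by_cases h1' : (j : ℕ) + 1 = (s : ℕ)
        · rw [if_pos h1']
          have hsub : ∏ i ∈ Finset.Ici s, (if i < j then (0 : F) ^ (a i + b i)
                else if i = j then 1 else ∑ x : F, x ^ (a i + b i))
              = ∏ i, (if i < j then (0 : F) ^ (a i + b i)
                else if i = j then 1 else ∑ x : F, x ^ (a i + b i)) := by
            refine Finset.prod_subset (Finset.subset_univ _) ?_
            intro i _ hi
            have hile : i < s := lt_of_not_ge (by simpa using hi)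
            have hval : (i : ℕ) ≤ (j : ℕ) := by
              have := (Fin.lt_def.1 hile); omega
            rcases hval.lt_or_eq with h2 | h2
            · rw [if_pos (Fin.lt_def.2 h2), hmin i hile, pow_zero]
            · have h3 : i = j := Fin.ext h2
              subst h3; rw [if_neg (lt_irrefl i), if_pos rfl]
          rw [← hsub, ← Finset.Ioi_insert, Finset.prod_insert Finset.notMem_Ioi_self]
          congr 1
          · rw [if_neg (not_lt.2 hlt.le), if_neg hlt.ne']
          · refine Finset.prod_congr rfl fun i hi => ?_
            have h' : s < i := Finset.mem_Ioi.1 hi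
            have h'' : j < i := hlt.trans h'
            rw [if_neg (not_lt.2 h''.le), if_neg h''.ne']
        · rw [if_neg h1']
          have hjv : (j : ℕ) + 1 < (s : ℕ) := by
            have := Fin.lt_def.1 hlt; omega
          have hi₁lt : (j : ℕ) + 1 < m + 1 := by
            have := s.isLt; omega
          set i₁ : Fin (m + 1) := ⟨(j : ℕ) + 1, hi₁lt⟩ with hi₁
          apply Finset.prod_eq_zero (Finset.mem_univ i₁)
          have hji : j < i₁ := by rw [Fin.lt_def]; simp [hi₁]
          have his : i₁ < s := by rw [Fin.lt_def]; exact hjv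
          rw [if_neg (not_lt.2 hji.le), if_neg hji.ne', hσ, if_neg]
          rintro ⟨-, hpos⟩
          rw [hmin i₁ his] at hpos
          exact lt_irrefl 0 hpos
      · rw [if_neg (by have := Fin.lt_def.1 hgt; omega : ¬((j : ℕ) + 1 = (s : ℕ)))]
        apply Finset.prod_eq_zero (Finset.mem_univ s)
        rw [if_pos hgt, zero_pow hs.ne']
  have hps : projSum F m (fun i => a i + b i)
      = (if 0 < (s : ℕ) then (∑ x : F, x ^ (a s + b s)) * P else 0) + P := by
    rw [projSum_eq, Finset.sum_congr rfl fun j _ => hT j]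
    rcases Nat.eq_zero_or_pos (s : ℕ) with h0 | hpos
    · rw [if_neg (by omega)]
      rw [Finset.sum_eq_single s]
      · rw [if_pos rfl, zero_add]
      · intro j _ hjne
        rw [if_neg hjne, if_neg (by omega : ¬((j : ℕ) + 1 = (s : ℕ)))]
      · intro h; exact absurd (Finset.mem_univ s) h
    · rw [if_pos hpos]
      have hj₀lt : (s : ℕ) - 1 < m + 1 := by have := s.isLt; omega
      set j₀ : Fin (m + 1) := ⟨(s : ℕ) - 1, hj₀lt⟩ with hj₀
      have hj₀s : j₀ ≠ s := by
        refine Fin.ne_of_val_ne ?_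
        simp only [hj₀]
        omega
      have hj₀1 : (j₀ : ℕ) + 1 = (s : ℕ) := by simp only [hj₀]; omega
      rw [← Finset.sum_subset (Finset.subset_univ {j₀, s}) ?_]
      · rw [Finset.sum_pair hj₀s, if_neg hj₀s, if_pos hj₀1, if_pos rfl]
      · intro j _ hj
        simp only [Finset.mem_insert, Finset.mem_singleton, not_or] at hj
        rw [if_neg hj.2, if_neg ?_]
        intro hc
        exact hj.1 (Fin.ext (by omega))
  have hiff : projSum F m (fun i => a i + b i) ≠ 0 ↔
      (∀ j, s < j → (q - 1) ∣ (a j + b j) ∧ 0 < a j + b j) := by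
    constructor
    · intro hne
      apply hDofP
      intro hP0
      apply hne
      rw [hps, hP0]
      simp
    · intro hD
      have hz : (if 0 < (s : ℕ) then (∑ x : F, x ^ (a s + b s)) * P else 0) + P = P := by
        rw [hσs hD]; split_ifs <;> simp
      rw [hps, hz]
      exact hPne hD
  refine ⟨⟨fun hne => ⟨hmod (hiff.1 hne), hiff.1 hne⟩, fun h => hiff.2 h.2⟩, ?_⟩
  intro hne
  have hD := hiff.1 hne
  have hz : (if 0 < (s : ℕ) then (∑ x : F, x ^ (a s + b s)) * P else 0) + P = P := by
    rw [hσs hD]; split_ifs <;> simp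
  rw [hps, hz]
  exact hPval hD
end

section
/- Let v ∈ (rQ/2, (r+1)Q/2) with Q = q-1, and suppose m ≥ r+1. If the projective inner product ⟨ev(X^a), ev(X^b)⟩ of two degree-v monomials is nonzero, then a_i = b_i = 0 for every index i < m - r. -/
open Finset

/-- Sum of `x^N` over the whole field is nonzero only when `N` is a positive
multiple of `q - 1`. -/
lemma sumpow_ne_zero {F : Type*} [Field F] [Fintype F] [DecidableEq F] {N : ℕ}
    (h : (∑ x : F, x ^ N) ≠ 0) : N ≠ 0 ∧ (Fintype.card F - 1) ∣ N := by
  have hN : N ≠ 0 := by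
    rintro rfl
    simp only [pow_zero, Finset.sum_const, Finset.card_univ, nsmul_one,
      FiniteField.cast_card_eq_zero] at h
    exact h rfl
  refine ⟨hN, ?_⟩
  let φ : Fˣ ↪ F := ⟨fun x ↦ x, Units.val_injective⟩
  have himg : univ.map φ = univ \ {0} := by
    ext x
    simpa only [mem_map, mem_univ, Function.Embedding.coeFn_mk, true_and, mem_sdiff,
      mem_singleton, φ, IsUnit, ne_eq] using isUnit_iff_ne_zero
  have key : (∑ x : F, x ^ N) = ∑ x : Fˣ, (x ^ N : F) := by
    calc ∑ x : F, x ^ N = ∑ x ∈ univ \ {(0 : F)}, x ^ N := by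
          rw [← Finset.sum_sdiff ({0} : Finset F).subset_univ, Finset.sum_singleton,
            zero_pow hN, add_zero]
      _ = ∑ x : Fˣ, (x ^ N : F) := by simp [φ, ← himg, univ.sum_map φ]
  rw [key, FiniteField.sum_pow_units] at h
  by_contra hd
  rw [if_neg hd] at h
  exact h rfl

/-- Nonzero-entry criterion: if `projSum F m c ≠ 0`, then there is an index `j`
such that `c i = 0` for all `i < j` and `c i` is a nonzero multiple of `q - 1`
for all `i > j`. -/
lemma projSum_ne_zero {F : Type*} [Field F] [Fintype F] [DecidableEq F] {m : ℕ}
    {c : Fin (m + 1) → ℕ} (hne : projSum F m c ≠ 0) :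
    ∃ j : Fin (m + 1), (∀ i, i < j → c i = 0) ∧
      ∀ i, j < i → c i ≠ 0 ∧ (Fintype.card F - 1) ∣ c i := by
  classical
  set T : Fin (m + 1) → Fin (m + 1) → Finset F :=
    fun j i => if i < j then {0} else if i = j then {1} else univ with hT
  have hmem : ∀ (j : Fin (m + 1)) (p : Fin (m + 1) → F),
      p ∈ Fintype.piFinset (T j) ↔ p j = 1 ∧ ∀ i, i < j → p i = 0 := by
    intro j p
    simp only [Fintype.mem_piFinset, hT]
    constructor
    · intro h
      refine ⟨?_, fun i hi => ?_⟩
      · have := h j; simpa using this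
      · have := h i; rw [if_pos hi] at this; simpa using this
    · rintro ⟨h1, h0⟩ i
      split_ifs with hlt heq
      · simp [h0 i hlt]
      · subst heq; simp [h1]
      · simp
  have hset : (Finset.univ.filter
      (fun p : Fin (m + 1) → F => ∃ j, p j = 1 ∧ ∀ i, i < j → p i = 0)) =
      univ.biUnion (fun j => Fintype.piFinset (T j)) := by
    ext p
    simp only [mem_filter, mem_univ, true_and, mem_biUnion, hmem]
  have hdisj : ((univ : Finset (Fin (m + 1))) : Set (Fin (m + 1))).PairwiseDisjoint
      (fun j => Fintype.piFinset (T j)) := by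
    intro j _ k _ hjk
    refine Finset.disjoint_left.mpr fun p hpj hpk => ?_
    rw [hmem] at hpj hpk
    rcases lt_or_gt_of_ne hjk with h | h
    · exact one_ne_zero (hpj.1 ▸ hpk.2 j h)
    · exact one_ne_zero (hpk.1 ▸ hpj.2 k h)
  have hsum : projSum F m c = ∑ j : Fin (m + 1), ∏ i, ∑ x ∈ T j i, x ^ c i := by
    rw [projSum, hset, Finset.sum_biUnion hdisj]
    exact Finset.sum_congr rfl fun j _ => (Finset.prod_univ_sum _ _).symm
  rw [hsum] at hne
  obtain ⟨j, _, hj⟩ := Finset.exists_ne_zero_of_sum_ne_zero hne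
  have hfac : ∀ i, (∑ x ∈ T j i, x ^ c i) ≠ 0 := by
    intro i hi
    exact hj (Finset.prod_eq_zero (mem_univ i) hi)
  refine ⟨j, fun i hi => ?_, fun i hi => ?_⟩
  · have := hfac i
    rw [hT] at this
    simp only [if_pos hi, Finset.sum_singleton] at this
    by_contra hc
    exact this (zero_pow hc)
  · have := hfac i
    rw [hT] at this
    simp only [if_neg (not_lt_of_gt hi), if_neg (ne_of_gt hi)] at this
    exact sumpow_ne_zero this

/-- Support theorem: if `v` lies in the open interval `(rQ/2, (r+1)Q/2)` and
`m ≥ r + 1`, then a nonzero projective inner product of two degree-`v` monomials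
forces `a_i = b_i = 0` for every `i < m - r`. -/
theorem projSum_support (F : Type*) [Field F] [Fintype F] [DecidableEq F]
    (q r v m : ℕ) (hq : Fintype.card F = q) (hm : r + 1 ≤ m)
    (h1 : r * (q - 1) < 2 * v) (h2 : 2 * v < (r + 1) * (q - 1))
    (a b : Fin (m + 1) → ℕ) (hav : ∑ i, a i = v) (hbv : ∑ i, b i = v)
    (hne : projSum F m (fun i => a i + b i) ≠ 0) :
    ∀ i : Fin (m + 1), (i : ℕ) < m - r → a i = 0 ∧ b i = 0 := by
  obtain ⟨j, hzero, hpos⟩ := projSum_ne_zero hne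
  rw [hq] at hpos
  -- each coordinate after `j` is at least `q - 1`
  have hQpos : 0 < q - 1 := by
    have : 2 ≤ q := hq ▸ Fintype.one_lt_card
    omega
  have hbig : ∀ i : Fin (m + 1), j < i → q - 1 ≤ a i + b i := fun i hi =>
    Nat.le_of_dvd (Nat.pos_of_ne_zero (hpos i hi).1) (hpos i hi).2
  -- counting: (m - j) * (q - 1) ≤ 2 * v
  have hcard : (Finset.Ioi j).card = m - (j : ℕ) := by
    rw [Fin.card_Ioi]; omega
  have hle1 : (Finset.Ioi j).card * (q - 1) ≤ ∑ i ∈ Finset.Ioi j, (a i + b i) := by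
    calc (Finset.Ioi j).card * (q - 1) = (Finset.Ioi j).card • (q - 1) := by
          rw [smul_eq_mul]
      _ ≤ ∑ i ∈ Finset.Ioi j, (a i + b i) :=
          Finset.card_nsmul_le_sum _ _ _ fun i hi => hbig i (Finset.mem_Ioi.mp hi)
  have hle2 : ∑ i ∈ Finset.Ioi j, (a i + b i) ≤ 2 * v := by
    calc ∑ i ∈ Finset.Ioi j, (a i + b i) ≤ ∑ i, (a i + b i) :=
          Finset.sum_le_sum_of_subset (Finset.subset_univ _)
      _ = 2 * v := by rw [Finset.sum_add_distrib, hav, hbv]; ring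
  have hmj : (m - (j : ℕ)) * (q - 1) < (r + 1) * (q - 1) := by
    calc (m - (j : ℕ)) * (q - 1) ≤ 2 * v := by rw [← hcard]; exact le_trans hle1 hle2
      _ < (r + 1) * (q - 1) := h2
  have hjge : m - r ≤ (j : ℕ) := by
    have := Nat.lt_of_mul_lt_mul_right hmj
    omega
  intro i hi
  have hij : i < j := by
    rw [Fin.lt_def]; omega
  have := hzero i hij
  constructor <;> omega
end
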